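/- arXiv:2004.03371 — 5 statements merged into one kernel-verified Lean document; each statement's English description precedes it below -/
import Mathlib

section
/- Let ρ > 1 be a real number. Then the function K₁ : ℝ × ℝ → ℝ defined by K₁(u,v) = (1/(36·u·(1−u)) − 1/36)·v² is convex on the set (0, 1/ρ) × ℝ, i.e. on {(u,v) : 0 < u < 1/ρ}. -/
private lemma qpos (u : ℝ) : 0 < u ^ 2 - u + 1 := by nlinarith [sq_nonneg (2 * u - 1)]

private lemma combo_pos {a b x₁ x₂ : ℝ} (ha : 0 ≤ a) (hb : 0 ≤ b) (hab : a + b = 1)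
    (hx1 : 0 < x₁) (hx2 : 0 < x₂) : 0 < a * x₁ + b * x₂ := by
  rcases lt_or_eq_of_le ha with h | h
  · have : 0 ≤ b * x₂ := mul_nonneg hb hx2.le
    nlinarith
  · have hb1 : b = 1 := by linarith
    rw [← h, hb1]
    simpa using hx2

private lemma engel (a b v₁ v₂ x₁ x₂ : ℝ) (ha : 0 ≤ a) (hb : 0 ≤ b) (hab : a + b = 1)
    (hx1 : 0 < x₁) (hx2 : 0 < x₂) :
    (a * v₁ + b * v₂) ^ 2 / (a * x₁ + b * x₂) ≤ a * (v₁ ^ 2 / x₁) + b * (v₂ ^ 2 / x₂) := by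
  have hd : 0 < a * x₁ + b * x₂ := combo_pos ha hb hab hx1 hx2
  have hr : a * (v₁ ^ 2 / x₁) + b * (v₂ ^ 2 / x₂)
      = (a * v₁ ^ 2 * x₂ + b * v₂ ^ 2 * x₁) / (x₁ * x₂) := by
    field_simp
  rw [hr, div_le_div_iff₀ hd (mul_pos hx1 hx2)]
  nlinarith [mul_nonneg (mul_nonneg ha hb) (sq_nonneg (v₁ * x₂ - v₂ * x₁))]

private lemma hconc (a b u₁ u₂ : ℝ) (ha : 0 ≤ a) (hb : 0 ≤ b) (hab : a + b = 1)
    (h1 : 0 < u₁) (h1' : u₁ < 1) (h2 : 0 < u₂) (h2' : u₂ < 1) :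
    a * (36 * u₁ * (1 - u₁) / (u₁ ^ 2 - u₁ + 1)) + b * (36 * u₂ * (1 - u₂) / (u₂ ^ 2 - u₂ + 1))
      ≤ 36 * (a * u₁ + b * u₂) * (1 - (a * u₁ + b * u₂))
        / ((a * u₁ + b * u₂) ^ 2 - (a * u₁ + b * u₂) + 1) := by
  have hb' : b = 1 - a := by linarith
  subst hb'
  have q1 : 0 < u₁ ^ 2 - u₁ + 1 := qpos u₁
  have q2 : 0 < u₂ ^ 2 - u₂ + 1 := qpos u₂
  have qw : 0 < (a * u₁ + (1 - a) * u₂) ^ 2 - (a * u₁ + (1 - a) * u₂) + 1 := qpos _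
  have hG : 0 ≤ a * (u₁ * (1 - u₁)) + (1 - a) * (u₂ * (1 - u₂))
      + u₁ * (1 - u₂) + u₂ * (1 - u₁) := by
    have t1 : 0 ≤ a * (u₁ * (1 - u₁)) :=
      mul_nonneg ha (mul_nonneg h1.le (by linarith))
    have t2 : 0 ≤ (1 - a) * (u₂ * (1 - u₂)) :=
      mul_nonneg hb (mul_nonneg h2.le (by linarith))
    have t3 : 0 ≤ u₁ * (1 - u₂) := mul_nonneg h1.le (by linarith)
    have t4 : 0 ≤ u₂ * (1 - u₁) := mul_nonneg h2.le (by linarith)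
    linarith
  have hcert : 0 ≤ a * (1 - a) * (u₁ - u₂) ^ 2 *
      (a * (u₁ * (1 - u₁)) + (1 - a) * (u₂ * (1 - u₂))
        + u₁ * (1 - u₂) + u₂ * (1 - u₁)) :=
    mul_nonneg (mul_nonneg (mul_nonneg ha hb) (sq_nonneg _)) hG
  have hr : a * (36 * u₁ * (1 - u₁) / (u₁ ^ 2 - u₁ + 1))
        + (1 - a) * (36 * u₂ * (1 - u₂) / (u₂ ^ 2 - u₂ + 1))
      = (a * (36 * u₁ * (1 - u₁)) * (u₂ ^ 2 - u₂ + 1)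
         + (1 - a) * (36 * u₂ * (1 - u₂)) * (u₁ ^ 2 - u₁ + 1))
        / ((u₁ ^ 2 - u₁ + 1) * (u₂ ^ 2 - u₂ + 1)) := by
    rw [mul_div_assoc', mul_div_assoc', div_add_div _ _ q1.ne' q2.ne']
    ring
  rw [hr, div_le_div_iff₀ (mul_pos q1 q2) qw]
  nlinarith [hcert]

private lemma hval_pos {u : ℝ} (h0 : 0 < u) (h1 : u < 1) :
    0 < 36 * u * (1 - u) / (u ^ 2 - u + 1) :=
  div_pos (by nlinarith) (qpos u)

private lemma fval (u v : ℝ) (h0 : 0 < u) (h1 : u < 1) :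
    (1 / (36 * u * (1 - u)) - 1 / 36) * v ^ 2
      = v ^ 2 / (36 * u * (1 - u) / (u ^ 2 - u + 1)) := by
  have hu : u ≠ 0 := h0.ne'
  have hu1 : (1 : ℝ) - u ≠ 0 := by linarith
  have hq : u ^ 2 - u + 1 ≠ 0 := (qpos u).ne'
  field_simp
  ring

theorem K1_convexOn (ρ : ℝ) (hρ : 1 < ρ) :
    ConvexOn ℝ {p : ℝ × ℝ | 0 < p.1 ∧ p.1 < 1 / ρ}
      (fun p : ℝ × ℝ => (1 / (36 * p.1 * (1 - p.1)) - 1 / 36) * p.2 ^ 2) := by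
  have hρ0 : (0 : ℝ) < ρ := by linarith
  have hρ1 : 1 / ρ < 1 := by
    rw [div_lt_one hρ0]; exact hρ
  constructor
  · intro p hp q hq a b ha hb hab
    have hmem : a • p.1 + b • q.1 ∈ Set.Ioo (0 : ℝ) (1 / ρ) :=
      (convex_Ioo (0 : ℝ) (1 / ρ)) (Set.mem_Ioo.mpr ⟨hp.1, hp.2⟩)
        (Set.mem_Ioo.mpr ⟨hq.1, hq.2⟩) ha hb hab
    exact ⟨hmem.1, hmem.2⟩
  · rintro ⟨u₁, v₁⟩ hp ⟨u₂, v₂⟩ hq a b ha hb hab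
    obtain ⟨h1, h1ρ⟩ := hp
    obtain ⟨h2, h2ρ⟩ := hq
    simp only at h1 h1ρ h2 h2ρ
    have h1' : u₁ < 1 := lt_trans h1ρ hρ1
    have h2' : u₂ < 1 := lt_trans h2ρ hρ1
    have hw0 : 0 < a * u₁ + b * u₂ := combo_pos ha hb hab h1 h2
    have hw1 : a * u₁ + b * u₂ < 1 := by nlinarith
    simp only [Prod.smul_mk, Prod.mk_add_mk, smul_eq_mul]
    have H1 := hval_pos h1 h1'
    have H2 := hval_pos h2 h2'
    have Hw := hval_pos hw0 hw1
    rw [fval _ _ hw0 hw1, fval _ _ h1 h1', fval _ _ h2 h2']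
    calc (a * v₁ + b * v₂) ^ 2
          / (36 * (a * u₁ + b * u₂) * (1 - (a * u₁ + b * u₂))
              / ((a * u₁ + b * u₂) ^ 2 - (a * u₁ + b * u₂) + 1))
        ≤ (a * v₁ + b * v₂) ^ 2
          / (a * (36 * u₁ * (1 - u₁) / (u₁ ^ 2 - u₁ + 1))
             + b * (36 * u₂ * (1 - u₂) / (u₂ ^ 2 - u₂ + 1))) := by
          apply div_le_div_of_nonneg_left (sq_nonneg _)
            (combo_pos ha hb hab H1 H2)
          exact hconc a b u₁ u₂ ha hb hab h1 h1' h2 h2'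
      _ ≤ a * (v₁ ^ 2 / (36 * u₁ * (1 - u₁) / (u₁ ^ 2 - u₁ + 1)))
          + b * (v₂ ^ 2 / (36 * u₂ * (1 - u₂) / (u₂ ^ 2 - u₂ + 1))) :=
          engel a b v₁ v₂ _ _ ha hb hab H1 H2
end

section
/- Fix an integer N ≥ 1, a real number h > 0, real numbers τ, N₁, α, β, χ > 0 and ρ > 1. Then each of the four functionals F_S, F_H, F_{K₁}, F_{K₂} (defined below) on periodic grid functions is convex on the convex set {φ : ∀(i,j), 0 < φ(i,j) < 1/ρ}. -/
/-- Forward difference in the x-direction. -/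
noncomputable def Dx {N : ℕ} (h : ℝ) (ν : ZMod N × ZMod N → ℝ) : ZMod N × ZMod N → ℝ :=
  fun p => (ν (p.1 + 1, p.2) - ν p) / h

/-- Forward difference in the y-direction. -/
noncomputable def Dy {N : ℕ} (h : ℝ) (ν : ZMod N × ZMod N → ℝ) : ZMod N × ZMod N → ℝ :=
  fun p => (ν (p.1, p.2 + 1) - ν p) / h

/-- The logarithmic Flory--Huggins part of the energy density. -/
noncomputable def Sfun (τ N₁ α β ρ : ℝ) (s : ℝ) : ℝ :=
  s / τ * Real.log (α * s / τ) + s / N₁ * Real.log (β * s / τ)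
    + (1 - ρ * s) * Real.log (1 - ρ * s)

/-- The concave part of the energy density. -/
noncomputable def Hfun (χ ρ : ℝ) (s : ℝ) : ℝ := χ * s * (1 - ρ * s)

/-- The deGennes diffusive coefficient. -/
noncomputable def kap (s : ℝ) : ℝ := 1 / (36 * s * (1 - s))

/-- Generic glue: a nonnegative multiple of a sum of pointwise jointly convex terms
is convex on a convex set of grid functions. -/
lemma convexOn_sum_form {ι : Type*} [Fintype ι] {C : Set (ι → ℝ)} (hC : Convex ℝ C)
    (c : ℝ) (hc : 0 ≤ c) (F : (ι → ℝ) → ι → ℝ)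
    (key : ∀ φ ∈ C, ∀ ψ ∈ C, ∀ a b : ℝ, 0 ≤ a → 0 ≤ b → a + b = 1 →
      ∀ p, F (a • φ + b • ψ) p ≤ a * F φ p + b * F ψ p) :
    ConvexOn ℝ C (fun φ => c * ∑ p, F φ p) := by
  refine ⟨hC, fun φ hφ ψ hψ a b ha hb hab => ?_⟩
  have hsum : ∑ p, F (a • φ + b • ψ) p ≤ ∑ p, (a * F φ p + b * F ψ p) :=
    Finset.sum_le_sum fun p _ => key φ hφ ψ hψ a b ha hb hab p
  calc c * ∑ p, F (a • φ + b • ψ) p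
      ≤ c * ∑ p, (a * F φ p + b * F ψ p) := mul_le_mul_of_nonneg_left hsum hc
    _ = a • (c * ∑ p, F φ p) + b • (c * ∑ p, F ψ p) := by
        rw [Finset.sum_add_distrib, ← Finset.mul_sum, ← Finset.mul_sum,
          smul_eq_mul, smul_eq_mul]; ring

/-- Convexity inequality for `x ↦ x log x` on the nonnegative reals. -/
lemma mulLog_ineq (u v p q : ℝ) (hu : 0 ≤ u) (hv : 0 ≤ v) (hp : 0 ≤ p) (hq : 0 ≤ q)
    (hpq : p + q = 1) :
    (p * u + q * v) * Real.log (p * u + q * v)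
      ≤ p * (u * Real.log u) + q * (v * Real.log v) := by
  have := Real.convexOn_mul_log.2 (Set.mem_Ici.mpr hu) (Set.mem_Ici.mpr hv) hp hq hpq
  simpa [smul_eq_mul] using this

/-- Convexity inequality for `x ↦ (x/e) log (c x / d)` on the positive reals. -/
lemma gkey (c d e : ℝ) (hc : 0 < c) (hd : 0 < d) (he : 0 < e)
    (x1 x2 p q : ℝ) (hx1 : 0 < x1) (hx2 : 0 < x2) (hp : 0 ≤ p) (hq : 0 ≤ q)
    (hpq : p + q = 1) :
    (p * x1 + q * x2) / e * Real.log (c * (p * x1 + q * x2) / d)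
      ≤ p * (x1 / e * Real.log (c * x1 / d)) + q * (x2 / e * Real.log (c * x2 / d)) := by
  have hX : 0 < p * x1 + q * x2 := by
    rcases eq_or_lt_of_le hp with h | h
    · have hq1 : q = 1 := by linarith
      rw [← h, hq1]; simpa using hx2
    · nlinarith [mul_nonneg hq hx2.le]
  have hl : ∀ s : ℝ, 0 < s → Real.log (c * s / d) = Real.log (c / d) + Real.log s := by
    intro s hs
    rw [show c * s / d = c / d * s by ring, Real.log_mul (by positivity) hs.ne']
  rw [hl _ hX, hl _ hx1, hl _ hx2]
  have hm := mulLog_ineq x1 x2 p q hx1.le hx2.le hp hq hpq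
  have hm' := mul_le_mul_of_nonneg_left hm (by positivity : (0:ℝ) ≤ 1 / e)
  have key : (p * x1 + q * x2) / e * (Real.log (c/d) + Real.log (p * x1 + q * x2))
      - (p * (x1 / e * (Real.log (c/d) + Real.log x1))
        + q * (x2 / e * (Real.log (c/d) + Real.log x2)))
      = 1 / e * ((p * x1 + q * x2) * Real.log (p * x1 + q * x2))
      - 1 / e * (p * (x1 * Real.log x1) + q * (x2 * Real.log x2)) := by ring
  linarith [hm', key.le, key.ge]

/-- Pointwise convexity inequality for the Flory--Huggins energy density. -/
lemma Skey (τ N₁ α β ρ : ℝ) (hτ : 0 < τ) (hN₁ : 0 < N₁) (hα : 0 < α) (hβ : 0 < β)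
    (hρ : 1 < ρ) (x1 x2 p q : ℝ) (hx1 : 0 < x1) (hx1' : x1 < 1 / ρ)
    (hx2 : 0 < x2) (hx2' : x2 < 1 / ρ) (hp : 0 ≤ p) (hq : 0 ≤ q) (hpq : p + q = 1) :
    Sfun τ N₁ α β ρ (p * x1 + q * x2)
      ≤ p * Sfun τ N₁ α β ρ x1 + q * Sfun τ N₁ α β ρ x2 := by
  have hρ0 : 0 < ρ := by linarith
  have h1 : 0 < 1 - ρ * x1 := by
    have := (lt_div_iff₀ hρ0).mp hx1'; linarith
  have h2 : 0 < 1 - ρ * x2 := by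
    have := (lt_div_iff₀ hρ0).mp hx2'; linarith
  have hA := gkey α τ τ hα hτ hτ x1 x2 p q hx1 hx2 hp hq hpq
  have hB := gkey β τ N₁ hβ hτ hN₁ x1 x2 p q hx1 hx2 hp hq hpq
  have hCc := mulLog_ineq (1 - ρ * x1) (1 - ρ * x2) p q h1.le h2.le hp hq hpq
  have e1 : p * (1 - ρ * x1) + q * (1 - ρ * x2) = 1 - ρ * (p * x1 + q * x2) := by
    linear_combination hpq
  rw [e1] at hCc
  simp only [Sfun]
  linarith [hA, hB, hCc]

/-- Pointwise concavity inequality for `Hfun`. -/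
lemma Hkey (χ ρ : ℝ) (hχ : 0 < χ) (hρ : 1 < ρ) (x1 x2 p q : ℝ)
    (hp : 0 ≤ p) (hq : 0 ≤ q) (hpq : p + q = 1) :
    -Hfun χ ρ (p * x1 + q * x2) ≤ p * -Hfun χ ρ x1 + q * -Hfun χ ρ x2 := by
  have hρ0 : 0 < ρ := by linarith
  have hq' : q = 1 - p := by linarith
  subst hq'
  simp only [Hfun]
  have hid : p * -(χ * x1 * (1 - ρ * x1)) + (1 - p) * -(χ * x2 * (1 - ρ * x2))
      - -(χ * (p * x1 + (1 - p) * x2) * (1 - ρ * (p * x1 + (1 - p) * x2)))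
      = χ * ρ * (p * (1 - p) * (x1 - x2) ^ 2) := by ring
  have h0 : 0 ≤ χ * ρ * (p * (1 - p) * (x1 - x2) ^ 2) :=
    mul_nonneg (mul_pos hχ hρ0).le
      (mul_nonneg (mul_nonneg hp (by linarith)) (sq_nonneg _))
  linarith [hid]

/-- Concavity of `x ↦ x(1-x)/(1-x+x²)` on `(0,1)`, in explicit form. -/
lemma c_concave (x1 x2 a : ℝ) (hx1 : 0 < x1) (hx1' : x1 < 1) (hx2 : 0 < x2)
    (hx2' : x2 < 1) (ha : 0 ≤ a) (ha' : a ≤ 1) :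
    a * (x1 * (1 - x1) / (1 - x1 + x1 ^ 2)) + (1 - a) * (x2 * (1 - x2) / (1 - x2 + x2 ^ 2))
      ≤ (a * x1 + (1 - a) * x2) * (1 - (a * x1 + (1 - a) * x2))
          / (1 - (a * x1 + (1 - a) * x2) + (a * x1 + (1 - a) * x2) ^ 2) := by
  have hD1 : 0 < 1 - x1 + x1 ^ 2 := by nlinarith [sq_nonneg (1 - x1)]
  have hD2 : 0 < 1 - x2 + x2 ^ 2 := by nlinarith [sq_nonneg (1 - x2)]
  have hDX : 0 < 1 - (a * x1 + (1 - a) * x2) + (a * x1 + (1 - a) * x2) ^ 2 := by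
    nlinarith [sq_nonneg (1 - (a * x1 + (1 - a) * x2))]
  rw [show a * (x1 * (1 - x1) / (1 - x1 + x1 ^ 2))
        = a * (x1 * (1 - x1)) / (1 - x1 + x1 ^ 2) by ring,
    show (1 - a) * (x2 * (1 - x2) / (1 - x2 + x2 ^ 2))
        = (1 - a) * (x2 * (1 - x2)) / (1 - x2 + x2 ^ 2) by ring,
    div_add_div _ _ hD1.ne' hD2.ne', div_le_div_iff₀ (by positivity) hDX]
  have hB1 : 0 ≤ (1 - x2) * (x1 + x2) + x2 * (1 - x1) := by
    nlinarith [mul_nonneg (by linarith : (0:ℝ) ≤ 1 - x2) (by linarith : (0:ℝ) ≤ x1 + x2),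
      mul_nonneg hx2.le (by linarith : (0:ℝ) ≤ 1 - x1)]
  have hB2 : 0 ≤ x1 * (1 - x2) + x2 * (1 - x1) + x1 * (1 - x1) := by
    nlinarith [mul_nonneg hx1.le (by linarith : (0:ℝ) ≤ 1 - x2),
      mul_nonneg hx2.le (by linarith : (0:ℝ) ≤ 1 - x1),
      mul_nonneg hx1.le (by linarith : (0:ℝ) ≤ 1 - x1)]
  have hmain : 0 ≤ a * (1 - a) * (x1 - x2) ^ 2 *
      ((1 - a) * ((1 - x2) * (x1 + x2) + x2 * (1 - x1))
        + a * (x1 * (1 - x2) + x2 * (1 - x1) + x1 * (1 - x1))) :=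
    mul_nonneg (mul_nonneg (mul_nonneg ha (by linarith)) (sq_nonneg _))
      (by nlinarith [mul_nonneg (by linarith : (0:ℝ) ≤ 1 - a) hB1, mul_nonneg ha hB2])
  nlinarith [hmain]

/-- Pointwise joint convexity of `(x, u) ↦ (kap x - 1/36) u²` on `(0,1) × ℝ`. -/
lemma kapkey (x1 x2 u1 u2 a b : ℝ) (hx1 : 0 < x1) (hx1' : x1 < 1) (hx2 : 0 < x2)
    (hx2' : x2 < 1) (ha : 0 ≤ a) (hb : 0 ≤ b) (hab : a + b = 1) :
    (kap (a * x1 + b * x2) - 1 / 36) * (a * u1 + b * u2) ^ 2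
      ≤ a * ((kap x1 - 1 / 36) * u1 ^ 2) + b * ((kap x2 - 1 / 36) * u2 ^ 2) := by
  have hb' : b = 1 - a := by linarith
  subst hb'
  have ha' : a ≤ 1 := by linarith
  have hX0 : 0 < a * x1 + (1 - a) * x2 := by
    rcases eq_or_lt_of_le ha with hA | hA
    · rw [← hA]; norm_num; exact hx2
    · have h1 := mul_pos hA hx1
      have h2 := mul_nonneg (by linarith : (0:ℝ) ≤ 1 - a) hx2.le
      linarith
  have hX1 : a * x1 + (1 - a) * x2 < 1 := by
    rcases eq_or_lt_of_le ha with hA | hA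
    · rw [← hA]; norm_num; exact hx2'
    · have h1 := mul_lt_mul_of_pos_left hx1' hA
      have h2 := mul_le_mul_of_nonneg_left hx2'.le (by linarith : (0:ℝ) ≤ 1 - a)
      nlinarith
  have hkap : ∀ x : ℝ, 0 < x → x < 1 →
      kap x - 1 / 36 = 1 / (36 * (x * (1 - x) / (1 - x + x ^ 2))) := by
    intro x h0 h1
    have hs : (0:ℝ) < x * (1 - x) := by nlinarith
    have hD : (0:ℝ) < 1 - x + x ^ 2 := by nlinarith [sq_nonneg (1 - x)]
    have hden : (0:ℝ) < 36 * (x * (1 - x) / (1 - x + x ^ 2)) := by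
      have := div_pos hs hD; linarith
    simp only [kap]
    rw [eq_div_iff hden.ne']
    field_simp [h0.ne', (show (1:ℝ) - x ≠ 0 from ne_of_gt (by linarith)), hD.ne']
    ring
  have hconc := c_concave x1 x2 a hx1 hx1' hx2 hx2' ha ha'
  rw [hkap _ hX0 hX1, hkap _ hx1 hx1', hkap _ hx2 hx2']
  set c1 := x1 * (1 - x1) / (1 - x1 + x1 ^ 2) with hc1def
  set c2 := x2 * (1 - x2) / (1 - x2 + x2 ^ 2) with hc2def
  set cX := (a * x1 + (1 - a) * x2) * (1 - (a * x1 + (1 - a) * x2))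
      / (1 - (a * x1 + (1 - a) * x2) + (a * x1 + (1 - a) * x2) ^ 2) with hcXdef
  have hD1 : 0 < 1 - x1 + x1 ^ 2 := by nlinarith [sq_nonneg (1 - x1)]
  have hD2 : 0 < 1 - x2 + x2 ^ 2 := by nlinarith [sq_nonneg (1 - x2)]
  have hDX : 0 < 1 - (a * x1 + (1 - a) * x2) + (a * x1 + (1 - a) * x2) ^ 2 := by
    nlinarith [sq_nonneg (1 - (a * x1 + (1 - a) * x2))]
  have hc1 : 0 < c1 := div_pos (by nlinarith) hD1
  have hc2 : 0 < c2 := div_pos (by nlinarith) hD2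
  have hcX : 0 < cX := div_pos (by nlinarith) hDX
  clear_value c1 c2 cX
  have hsum : 0 < a * c1 + (1 - a) * c2 := by
    rcases eq_or_lt_of_le ha with hA | hA
    · rw [← hA]; norm_num; exact hc2
    · have h1 := mul_pos hA hc1
      have h2 := mul_nonneg (by linarith : (0:ℝ) ≤ 1 - a) hc2.le
      linarith
  have stepA : 1 / (36 * cX) * (a * u1 + (1 - a) * u2) ^ 2
      ≤ (a * u1 + (1 - a) * u2) ^ 2 / (36 * (a * c1 + (1 - a) * c2)) := by
    rw [one_div, inv_mul_eq_div]
    exact div_le_div_of_nonneg_left (sq_nonneg _) (by linarith) (by linarith)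
  have hid : (a * c1 + (1 - a) * c2) * (a * u1 ^ 2 * c2 + (1 - a) * u2 ^ 2 * c1)
      - (a * u1 + (1 - a) * u2) ^ 2 * (c1 * c2)
      = a * (1 - a) * (u1 * c2 - u2 * c1) ^ 2 := by ring
  have hCS : (a * u1 + (1 - a) * u2) ^ 2 * (c1 * c2)
      ≤ (a * c1 + (1 - a) * c2) * (a * u1 ^ 2 * c2 + (1 - a) * u2 ^ 2 * c1) := by
    have h0 : 0 ≤ a * (1 - a) * (u1 * c2 - u2 * c1) ^ 2 :=
      mul_nonneg (mul_nonneg ha (by linarith)) (sq_nonneg _)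
    linarith [hid]
  have stepB : (a * u1 + (1 - a) * u2) ^ 2 / (36 * (a * c1 + (1 - a) * c2))
      ≤ (a * u1 ^ 2 * c2 + (1 - a) * u2 ^ 2 * c1) / (36 * (c1 * c2)) := by
    rw [div_le_div_iff₀ (by linarith) (by positivity)]
    linarith [hCS]
  have expand : a * (1 / (36 * c1) * u1 ^ 2) + (1 - a) * (1 / (36 * c2) * u2 ^ 2)
      = (a * u1 ^ 2 * c2 + (1 - a) * u2 ^ 2 * c1) / (36 * (c1 * c2)) := by
    field_simp
  calc 1 / (36 * cX) * (a * u1 + (1 - a) * u2) ^ 2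
      ≤ (a * u1 + (1 - a) * u2) ^ 2 / (36 * (a * c1 + (1 - a) * c2)) := stepA
    _ ≤ (a * u1 ^ 2 * c2 + (1 - a) * u2 ^ 2 * c1) / (36 * (c1 * c2)) := stepB
    _ = a * (1 / (36 * c1) * u1 ^ 2) + (1 - a) * (1 / (36 * c2) * u2 ^ 2) := expand.symm

lemma sq_comb (u v p q : ℝ) (hp : 0 ≤ p) (hq : 0 ≤ q) (hpq : p + q = 1) :
    (p * u + q * v) ^ 2 ≤ p * u ^ 2 + q * v ^ 2 := by
  nlinarith [mul_nonneg (mul_nonneg hp hq) (sq_nonneg (u - v))]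

theorem discrete_energy_convex_splitting (N : ℕ) [NeZero N] (hN : 1 ≤ N)
    (h τ N₁ α β χ ρ : ℝ) (hh : 0 < h) (hτ : 0 < τ) (hN₁ : 0 < N₁)
    (hα : 0 < α) (hβ : 0 < β) (hχ : 0 < χ) (hρ : 1 < ρ) :
    ConvexOn ℝ {φ : ZMod N × ZMod N → ℝ | ∀ p, 0 < φ p ∧ φ p < 1 / ρ}
      (fun φ => h ^ 2 * ∑ p : ZMod N × ZMod N, Sfun τ N₁ α β ρ (φ p)) ∧
    ConvexOn ℝ {φ : ZMod N × ZMod N → ℝ | ∀ p, 0 < φ p ∧ φ p < 1 / ρ}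
      (fun φ => -(h ^ 2 * ∑ p : ZMod N × ZMod N, Hfun χ ρ (φ p))) ∧
    ConvexOn ℝ {φ : ZMod N × ZMod N → ℝ | ∀ p, 0 < φ p ∧ φ p < 1 / ρ}
      (fun φ => h ^ 2 * ∑ p : ZMod N × ZMod N, (kap (φ p) - 1 / 36) * ((1 : ℝ) / 2) *
        ((Dx h φ p) ^ 2 + (Dx h φ (p.1 - 1, p.2)) ^ 2
          + (Dy h φ p) ^ 2 + (Dy h φ (p.1, p.2 - 1)) ^ 2)) ∧
    ConvexOn ℝ {φ : ZMod N × ZMod N → ℝ | ∀ p, 0 < φ p ∧ φ p < 1 / ρ}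
      (fun φ => h ^ 2 / 36 * ∑ p : ZMod N × ZMod N, ((Dx h φ p) ^ 2 + (Dy h φ p) ^ 2)) := by
  have hρ0 : 0 < ρ := by linarith
  have hρ1 : 1 / ρ < 1 := by rw [div_lt_one hρ0]; exact hρ
  have hC : Convex ℝ {φ : ZMod N × ZMod N → ℝ | ∀ p, 0 < φ p ∧ φ p < 1 / ρ} := by
    intro φ hφ ψ hψ a b ha hb hab p
    have h2 := (convex_Ioo (0:ℝ) (1/ρ)) (Set.mem_Ioo.mpr (hφ p)) (Set.mem_Ioo.mpr (hψ p))
      ha hb hab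
    simpa [Set.mem_Ioo, smul_eq_mul] using h2
  refine ⟨?_, ?_, ?_, ?_⟩
  · exact convexOn_sum_form hC (h ^ 2) (by positivity) _
      (fun φ hφ ψ hψ a b ha hb hab p => by
        simp only [Pi.add_apply, Pi.smul_apply, smul_eq_mul]
        exact Skey τ N₁ α β ρ hτ hN₁ hα hβ hρ (φ p) (ψ p) a b
          (hφ p).1 (hφ p).2 (hψ p).1 (hψ p).2 ha hb hab)
  · have key := convexOn_sum_form hC (h ^ 2) (by positivity)
      (fun φ p => -Hfun χ ρ (φ p))
      (fun φ hφ ψ hψ a b ha hb hab p => by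
        simp only [Pi.add_apply, Pi.smul_apply, smul_eq_mul]
        exact Hkey χ ρ hχ hρ (φ p) (ψ p) a b ha hb hab)
    have heq : (fun φ : ZMod N × ZMod N → ℝ =>
        -(h ^ 2 * ∑ p : ZMod N × ZMod N, Hfun χ ρ (φ p)))
        = fun φ => h ^ 2 * ∑ p : ZMod N × ZMod N, -Hfun χ ρ (φ p) := by
      funext φ
      rw [Finset.sum_neg_distrib, mul_neg]
    rw [heq]
    exact key
  · exact convexOn_sum_form hC (h ^ 2) (by positivity) _
      (fun φ hφ ψ hψ a b ha hb hab p => by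
        have hdx : ∀ q : ZMod N × ZMod N,
            Dx h (a • φ + b • ψ) q = a * Dx h φ q + b * Dx h ψ q := by
          intro q; simp only [Dx, Pi.add_apply, Pi.smul_apply, smul_eq_mul]; ring
        have hdy : ∀ q : ZMod N × ZMod N,
            Dy h (a • φ + b • ψ) q = a * Dy h φ q + b * Dy h ψ q := by
          intro q; simp only [Dy, Pi.add_apply, Pi.smul_apply, smul_eq_mul]; ring
        rw [hdx p, hdx (p.1 - 1, p.2), hdy p, hdy (p.1, p.2 - 1)]
        simp only [Pi.add_apply, Pi.smul_apply, smul_eq_mul]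
        have hφ1 : φ p < 1 := lt_trans (hφ p).2 hρ1
        have hψ1 : ψ p < 1 := lt_trans (hψ p).2 hρ1
        have k1 := kapkey (φ p) (ψ p) (Dx h φ p) (Dx h ψ p) a b
          (hφ p).1 hφ1 (hψ p).1 hψ1 ha hb hab
        have k2 := kapkey (φ p) (ψ p) (Dx h φ (p.1 - 1, p.2)) (Dx h ψ (p.1 - 1, p.2)) a b
          (hφ p).1 hφ1 (hψ p).1 hψ1 ha hb hab
        have k3 := kapkey (φ p) (ψ p) (Dy h φ p) (Dy h ψ p) a b
          (hφ p).1 hφ1 (hψ p).1 hψ1 ha hb hab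
        have k4 := kapkey (φ p) (ψ p) (Dy h φ (p.1, p.2 - 1)) (Dy h ψ (p.1, p.2 - 1)) a b
          (hφ p).1 hφ1 (hψ p).1 hψ1 ha hb hab
        linarith [k1, k2, k3, k4])
  · exact convexOn_sum_form hC (h ^ 2 / 36) (by positivity) _
      (fun φ hφ ψ hψ a b ha hb hab p => by
        have hdx : Dx h (a • φ + b • ψ) p = a * Dx h φ p + b * Dx h ψ p := by
          simp only [Dx, Pi.add_apply, Pi.smul_apply, smul_eq_mul]; ring
        have hdy : Dy h (a • φ + b • ψ) p = a * Dy h φ p + b * Dy h ψ p := by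
          simp only [Dy, Pi.add_apply, Pi.smul_apply, smul_eq_mul]; ring
        rw [hdx, hdy]
        have s1 := sq_comb (Dx h φ p) (Dx h ψ p) a b ha hb hab
        have s2 := sq_comb (Dy h φ p) (Dy h ψ p) a b ha hb hab
        linarith [s1, s2])
end

section
/- Let E be a real inner product space and define Q : E × E → ℝ by Q(u,v) := (1/2)·‖u‖² − 2·⟪u, v⟫ + (5/2)·‖v‖². Then for all v₀, v₁, v₂ ∈ E, ⟪(3/2)·v₂ − 2·v₁ + (1/2)·v₀, v₂⟫ = (1/2)·(Q(v₁, v₂) − Q(v₀, v₁)) + (1/4)·‖v₂ − 2v₁ + v₀‖². -/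
open scoped RealInnerProductSpace

theorem bdf2_G_norm_telescoping_identity {E : Type*} [NormedAddCommGroup E]
    [InnerProductSpace ℝ E] (v₀ v₁ v₂ : E) :
    ⟪(3 / 2 : ℝ) • v₂ - (2 : ℝ) • v₁ + (1 / 2 : ℝ) • v₀, v₂⟫ =
      (1 / 2) * (((1 / 2) * ‖v₁‖ ^ 2 - 2 * ⟪v₁, v₂⟫ + (5 / 2) * ‖v₂‖ ^ 2)
          - ((1 / 2) * ‖v₀‖ ^ 2 - 2 * ⟪v₀, v₁⟫ + (5 / 2) * ‖v₁‖ ^ 2))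
        + (1 / 4) * ‖v₂ - (2 : ℝ) • v₁ + v₀‖ ^ 2 := by
  simp only [← real_inner_self_eq_norm_sq, inner_add_add_self, inner_sub_sub_self,
    inner_add_left, inner_add_right, inner_sub_left, inner_sub_right,
    inner_smul_left, inner_smul_right, real_inner_comm v₀ v₁, real_inner_comm v₀ v₂,
    real_inner_comm v₁ v₂, RCLike.conj_to_real]
  ring
end

section
/- Fix an integer N ≥ 1 and real numbers h > 0, Δt > 0, τ > 0, N₁ > 0, α > 0, β > 0, χ > 0 and ρ > 1, and suppose A ≥ χ²ρ². Let φⁿ⁺¹, φⁿ, φⁿ⁻¹ : ZMod N × ZMod N → ℝ be periodic grid functions with values in (0, 1/ρ) pointwise, with Σ_{(i,j)} φⁿ(i,j) = Σ_{(i,j)} φⁿ⁻¹(i,j), satisfying the scheme: for all (i,j), 3·φⁿ⁺¹(i,j) − 4·φⁿ(i,j) + φⁿ⁻¹(i,j) = 2Δt·Δ_h μ (i,j), where μ(i,j) := (1/τ + 1/N₁)·ln(φⁿ⁺¹(i,j)) − ρ·ln(1 − ρ·φⁿ⁺¹(i,j)) + κ'(φⁿ⁺¹(i,j))·(a_x((D_xφⁿ⁺¹)²)(i,j)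 + a_y((D_yφⁿ⁺¹)²)(i,j)) − 2·d_x((A_x κ(φⁿ⁺¹))·(D_xφⁿ⁺¹))(i,j) − 2·d_y((A_y κ(φⁿ⁺¹))·(D_yφⁿ⁺¹))(i,j) − 2χρ·(2φⁿ(i,j) − φⁿ⁻¹(i,j)) − A·Δt·Δ_h(φⁿ⁺¹ − φⁿ)(i,j). Let ψ_a, ψ_b be periodic grid functions with Σ_{(i,j)} ψ_a(i,j) = Σ_{(i,j)} ψ_b(i,j) = 0, −Δ_h ψ_a = φⁿ⁺¹ − φⁿ and −Δ_h ψ_b = φⁿ − φⁿ⁻¹. Define the discrete energy F(φ) := h² Σ_{(i,j)} [S(φ(i,j)) + H(φ(i,j)) + κ(φ(i,j))·(a_x((D_xφ)²)(i,j) + a_y((D_yφ)²)(i,j))] and the modified energies E⁺ := F(φⁿ⁺¹) + (1/(4Δt))·h² Σ_{(i,j)} ψ_a(i,j)·(φⁿ⁺¹ − φⁿ)(i,j) + χρ·h² Σ_{(i,j)} (φⁿ⁺¹ − φⁿ)(i,j)², E⁰ := F(φⁿ) + (1/(4Δt))·h² Σ_{(i,j)} ψ_b(i,j)·(φⁿ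 − φⁿ⁻¹)(i,j) + χρ·h² Σ_{(i,j)} (φⁿ − φⁿ⁻¹)(i,j)². Then E⁺ + (1/Δt)·(1 − χ²ρ²/A)·h² Σ_{(i,j)} ψ_a(i,j)·(φⁿ⁺¹ − φⁿ)(i,j) ≤ E⁰. -/
/-- Backward difference in the x-direction. -/
noncomputable def dx {N : ℕ} (h : ℝ) (f : ZMod N × ZMod N → ℝ) : ZMod N × ZMod N → ℝ :=
  fun p => (f p - f (p.1 - 1, p.2)) / h

/-- Backward difference in the y-direction. -/
noncomputable def dy {N : ℕ} (h : ℝ) (f : ZMod N × ZMod N → ℝ) : ZMod N × ZMod N → ℝ :=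
  fun p => (f p - f (p.1, p.2 - 1)) / h

/-- Forward average in the x-direction. -/
noncomputable def Ax {N : ℕ} (ν : ZMod N × ZMod N → ℝ) : ZMod N × ZMod N → ℝ :=
  fun p => (ν (p.1 + 1, p.2) + ν p) / 2

/-- Forward average in the y-direction. -/
noncomputable def Ay {N : ℕ} (ν : ZMod N × ZMod N → ℝ) : ZMod N × ZMod N → ℝ :=
  fun p => (ν (p.1, p.2 + 1) + ν p) / 2

/-- Backward average in the x-direction. -/
noncomputable def ax {N : ℕ} (w : ZMod N × ZMod N → ℝ) : ZMod N × ZMod N → ℝ :=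
  fun p => (w p + w (p.1 - 1, p.2)) / 2

/-- Backward average in the y-direction. -/
noncomputable def ay {N : ℕ} (w : ZMod N × ZMod N → ℝ) : ZMod N × ZMod N → ℝ :=
  fun p => (w p + w (p.1, p.2 - 1)) / 2

/-- The standard five-point discrete Laplacian on periodic grid functions. -/
noncomputable def lapH {N : ℕ} (h : ℝ) (ν : ZMod N × ZMod N → ℝ) : ZMod N × ZMod N → ℝ :=
  fun p => (ν (p.1 + 1, p.2) + ν (p.1 - 1, p.2) + ν (p.1, p.2 + 1) + ν (p.1, p.2 - 1)
    - 4 * ν p) / h ^ 2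

/-- The derivative of the deGennes diffusive coefficient. -/
noncomputable def kap' (s : ℝ) : ℝ := (2 * s - 1) / (36 * s ^ 2 * (1 - s) ^ 2)

/-- The discrete energy functional. -/
noncomputable def Fdisc {N : ℕ} [NeZero N] (h τ N₁ α β χ ρ : ℝ) (φ : ZMod N × ZMod N → ℝ) : ℝ :=
  h ^ 2 * ∑ p : ZMod N × ZMod N,
    (Sfun τ N₁ α β ρ (φ p) + Hfun χ ρ (φ p)
      + kap (φ p) * (ax (fun q => (Dx h φ q) ^ 2) p + ay (fun q => (Dy h φ q) ^ 2) p))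

/-- The discrete chemical potential of the second-order BDF scheme. -/
noncomputable def mu {N : ℕ} (h dt A τ N₁ χ ρ : ℝ)
    (φ φn φnm1 : ZMod N × ZMod N → ℝ) : ZMod N × ZMod N → ℝ :=
  fun p =>
    (1 / τ + 1 / N₁) * Real.log (φ p) - ρ * Real.log (1 - ρ * φ p)
      + kap' (φ p) * (ax (fun q => (Dx h φ q) ^ 2) p + ay (fun q => (Dy h φ q) ^ 2) p)
      - 2 * dx h (fun q => Ax (fun r => kap (φ r)) q * Dx h φ q) p
      - 2 * dy h (fun q => Ay (fun r => kap (φ r)) q * Dy h φ q) p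
      - 2 * χ * ρ * (2 * φn p - φnm1 p)
      - A * dt * lapH h (fun q => φ q - φn q) p

section EnergyHelpers
set_option maxHeartbeats 1000000
set_option linter.unusedSectionVars false

open Finset

variable {N : ℕ} [NeZero N]

lemma sum_shift_pt (c d : ZMod N) (f : ZMod N × ZMod N → ℝ) :
    ∑ p : ZMod N × ZMod N, f (p.1 + c, p.2 + d) = ∑ p : ZMod N × ZMod N, f p :=
  Fintype.sum_equiv ((Equiv.addRight c).prodCongr (Equiv.addRight d)) _ _ (fun _ => rfl)

lemma sbp_x (h : ℝ) (f g : ZMod N × ZMod N → ℝ) :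
    ∑ p : ZMod N × ZMod N, f p * dx h g p = -∑ p : ZMod N × ZMod N, Dx h f p * g p := by
  have h1 : ∑ p : ZMod N × ZMod N, f (p.1 + 1, p.2) * h⁻¹ * g p
      = ∑ p : ZMod N × ZMod N, f p * h⁻¹ * g (p.1 - 1, p.2) := by
    rw [← sum_shift_pt 1 0 (fun p => f p * h⁻¹ * g (p.1 - 1, p.2))]; simp
  simp only [dx, Dx]
  rw [Finset.sum_congr rfl (fun x _ => show f x * ((g x - g (x.1 - 1, x.2)) / h)
      = f x * h⁻¹ * g x - f x * h⁻¹ * g (x.1 - 1, x.2) by ring),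
    Finset.sum_congr rfl (fun x _ => show (f (x.1 + 1, x.2) - f x) / h * g x
      = f (x.1 + 1, x.2) * h⁻¹ * g x - f x * h⁻¹ * g x by ring),
    Finset.sum_sub_distrib, Finset.sum_sub_distrib, h1]
  ring

lemma sbp_y (h : ℝ) (f g : ZMod N × ZMod N → ℝ) :
    ∑ p : ZMod N × ZMod N, f p * dy h g p = -∑ p : ZMod N × ZMod N, Dy h f p * g p := by
  have h1 : ∑ p : ZMod N × ZMod N, f (p.1, p.2 + 1) * h⁻¹ * g p
      = ∑ p : ZMod N × ZMod N, f p * h⁻¹ * g (p.1, p.2 - 1) := by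
    rw [← sum_shift_pt 0 1 (fun p => f p * h⁻¹ * g (p.1, p.2 - 1))]; simp
  simp only [dy, Dy]
  rw [Finset.sum_congr rfl (fun x _ => show f x * ((g x - g (x.1, x.2 - 1)) / h)
      = f x * h⁻¹ * g x - f x * h⁻¹ * g (x.1, x.2 - 1) by ring),
    Finset.sum_congr rfl (fun x _ => show (f (x.1, x.2 + 1) - f x) / h * g x
      = f (x.1, x.2 + 1) * h⁻¹ * g x - f x * h⁻¹ * g x by ring),
    Finset.sum_sub_distrib, Finset.sum_sub_distrib, h1]
  ring

lemma adj_ax (f g : ZMod N × ZMod N → ℝ) :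
    ∑ p : ZMod N × ZMod N, f p * ax g p = ∑ p : ZMod N × ZMod N, Ax f p * g p := by
  have h1 : ∑ p : ZMod N × ZMod N, f (p.1 + 1, p.2) * g p / 2
      = ∑ p : ZMod N × ZMod N, f p * g (p.1 - 1, p.2) / 2 := by
    rw [← sum_shift_pt 1 0 (fun p => f p * g (p.1 - 1, p.2) / 2)]; simp
  simp only [ax, Ax]
  rw [Finset.sum_congr rfl (fun x _ => show f x * ((g x + g (x.1 - 1, x.2)) / 2)
      = f x * g x / 2 + f x * g (x.1 - 1, x.2) / 2 by ring),
    Finset.sum_congr rfl (fun x _ => show (f (x.1 + 1, x.2) + f x) / 2 * g x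
      = f (x.1 + 1, x.2) * g x / 2 + f x * g x / 2 by ring),
    Finset.sum_add_distrib, Finset.sum_add_distrib, h1]
  ring

lemma adj_ay (f g : ZMod N × ZMod N → ℝ) :
    ∑ p : ZMod N × ZMod N, f p * ay g p = ∑ p : ZMod N × ZMod N, Ay f p * g p := by
  have h1 : ∑ p : ZMod N × ZMod N, f (p.1, p.2 + 1) * g p / 2
      = ∑ p : ZMod N × ZMod N, f p * g (p.1, p.2 - 1) / 2 := by
    rw [← sum_shift_pt 0 1 (fun p => f p * g (p.1, p.2 - 1) / 2)]; simp
  simp only [ay, Ay]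
  rw [Finset.sum_congr rfl (fun x _ => show f x * ((g x + g (x.1, x.2 - 1)) / 2)
      = f x * g x / 2 + f x * g (x.1, x.2 - 1) / 2 by ring),
    Finset.sum_congr rfl (fun x _ => show (f (x.1, x.2 + 1) + f x) / 2 * g x
      = f (x.1, x.2 + 1) * g x / 2 + f x * g x / 2 by ring),
    Finset.sum_add_distrib, Finset.sum_add_distrib, h1]
  ring

lemma lap_decomp (h : ℝ) (hne : h ≠ 0) (f : ZMod N × ZMod N → ℝ) (p : ZMod N × ZMod N) :
    lapH h f p = dx h (Dx h f) p + dy h (Dy h f) p := by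
  simp only [lapH, dx, dy, Dx, Dy]
  field_simp
  ring

lemma lap_pair (h : ℝ) (hne : h ≠ 0) (f g : ZMod N × ZMod N → ℝ) :
    ∑ p : ZMod N × ZMod N, g p * lapH h f p
      = -∑ p : ZMod N × ZMod N, (Dx h f p * Dx h g p + Dy h f p * Dy h g p) := by
  rw [Finset.sum_congr rfl (fun p _ => by rw [lap_decomp h hne f p, mul_add])]
  rw [Finset.sum_add_distrib, sbp_x, sbp_y, Finset.sum_add_distrib]
  ring_nf
  rw [Finset.sum_congr rfl (fun p (_ : p ∈ Finset.univ) =>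
      show Dx h f p * Dx h g p = Dx h g p * Dx h f p by ring),
    Finset.sum_congr rfl (fun p (_ : p ∈ Finset.univ) =>
      show Dy h f p * Dy h g p = Dy h g p * Dy h f p by ring)]

lemma lap_symm (h : ℝ) (hne : h ≠ 0) (f g : ZMod N × ZMod N → ℝ) :
    ∑ p : ZMod N × ZMod N, g p * lapH h f p = ∑ p : ZMod N × ZMod N, f p * lapH h g p := by
  rw [lap_pair h hne f g, lap_pair h hne g f, neg_inj]
  exact Finset.sum_congr rfl (fun p _ => by ring)

lemma sum_lap (h : ℝ) (hne : h ≠ 0) (f : ZMod N × ZMod N → ℝ) :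
    ∑ p : ZMod N × ZMod N, lapH h f p = 0 := by
  have h1 := lap_pair h hne f (fun _ => (1 : ℝ))
  simpa [Dx, Dy] using h1

lemma xlogx (u v : ℝ) (hu : 0 < u) (hv : 0 < v) :
    u * Real.log u - v * Real.log v ≤ (Real.log u + 1) * (u - v) := by
  have h := Real.log_le_sub_one_of_pos (show 0 < u / v by positivity)
  rw [Real.log_div (ne_of_gt hu) (ne_of_gt hv)] at h
  have h2 := mul_le_mul_of_nonneg_left h (le_of_lt hv)
  have h3 : v * (u / v - 1) = u - v := by field_simp
  nlinarith [h2, h3]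

lemma xlogx_gen (c x y : ℝ) (hc : 0 < c) (hx : 0 < x) (hy : 0 < y) :
    x * Real.log (c * x) - y * Real.log (c * y) ≤ (Real.log (c * x) + 1) * (x - y) := by
  have e : Real.log (c * x) - Real.log (c * y) = Real.log x - Real.log y := by
    rw [Real.log_mul (ne_of_gt hc) (ne_of_gt hx), Real.log_mul (ne_of_gt hc) (ne_of_gt hy)]
    ring
  have h := Real.log_le_sub_one_of_pos (show 0 < x / y by positivity)
  rw [Real.log_div (ne_of_gt hx) (ne_of_gt hy)] at h
  have h3 : y * (Real.log (c * x) - Real.log (c * y)) ≤ x - y := by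
    rw [e]
    have h5 := mul_le_mul_of_nonneg_left h (le_of_lt hy)
    have h4 : y * (x / y - 1) = x - y := by field_simp
    linarith
  nlinarith [h3]

lemma S_ineq (τ N₁ α β ρ x y : ℝ) (hτ : 0 < τ) (hN₁ : 0 < N₁) (hα : 0 < α) (hβ : 0 < β)
    (hx : 0 < x) (hx' : ρ * x < 1) (hy : 0 < y) (hy' : ρ * y < 1) :
    Sfun τ N₁ α β ρ x - Sfun τ N₁ α β ρ y
      ≤ ((1/τ + 1/N₁) * Real.log x - ρ * Real.log (1 - ρ*x)) * (x - y)
        + ((Real.log α - Real.log τ + 1)/τ + (Real.log β - Real.log τ + 1)/N₁ - ρ) * (x - y) := by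
  have q1 := xlogx_gen (α/τ) x y (by positivity) hx hy
  have q2 := xlogx_gen (β/τ) x y (by positivity) hx hy
  have q3 := xlogx (1 - ρ*x) (1 - ρ*y) (by linarith) (by linarith)
  simp only [Sfun]
  rw [show α*x/τ = α/τ*x by ring, show α*y/τ = α/τ*y by ring,
    show β*x/τ = β/τ*x by ring, show β*y/τ = β/τ*y by ring]
  have L1 : Real.log (α/τ*x) = Real.log α - Real.log τ + Real.log x := by
    rw [Real.log_mul (by positivity) (ne_of_gt hx), Real.log_div (ne_of_gt hα) (ne_of_gt hτ)]
  have L2 : Real.log (α/τ*y) = Real.log α - Real.log τ + Real.log y := by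
    rw [Real.log_mul (by positivity) (ne_of_gt hy), Real.log_div (ne_of_gt hα) (ne_of_gt hτ)]
  have L3 : Real.log (β/τ*x) = Real.log β - Real.log τ + Real.log x := by
    rw [Real.log_mul (by positivity) (ne_of_gt hx), Real.log_div (ne_of_gt hβ) (ne_of_gt hτ)]
  have L4 : Real.log (β/τ*y) = Real.log β - Real.log τ + Real.log y := by
    rw [Real.log_mul (by positivity) (ne_of_gt hy), Real.log_div (ne_of_gt hβ) (ne_of_gt hτ)]
  rw [L1, L2] at q1
  rw [L3, L4] at q2
  rw [L1, L2, L3, L4]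
  have s1 := mul_le_mul_of_nonneg_left q1 (le_of_lt (show (0:ℝ) < 1/τ by positivity))
  have s2 := mul_le_mul_of_nonneg_left q2 (le_of_lt (show (0:ℝ) < 1/N₁ by positivity))
  ring_nf at s1 s2 q3 ⊢
  linarith [s1, s2, q3]

lemma kap_ineq (s₁ s₂ t₁ t₂ : ℝ) (h1 : 0 < s₁) (h1' : s₁ < 1) (h2 : 0 < s₂) (h2' : s₂ < 1) :
    kap s₁ * t₁ ^ 2 - kap s₂ * t₂ ^ 2
      ≤ kap' s₁ * (s₁ - s₂) * t₁ ^ 2 + 2 * kap s₁ * t₁ * (t₁ - t₂) := by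
  have e1 : (0:ℝ) < 1 - s₁ := by linarith
  have e2 : (0:ℝ) < 1 - s₂ := by linarith
  have key : (kap' s₁ * (s₁ - s₂) * t₁ ^ 2 + 2 * kap s₁ * t₁ * (t₁ - t₂))
      - (kap s₁ * t₁ ^ 2 - kap s₂ * t₂ ^ 2)
      = ((36 * s₂ * (1 - s₂) * t₁ - 36 * s₁ * (1 - s₁) * t₂) ^ 2
          + 36 * (s₁ - s₂) ^ 2 * (36 * s₂ * (1 - s₂)) * t₁ ^ 2)
        / ((36 * s₁ * (1 - s₁)) ^ 2 * (36 * s₂ * (1 - s₂))) := by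
    rw [kap, kap, kap']
    field_simp
    ring
  have pos : (0:ℝ) ≤ ((36 * s₂ * (1 - s₂) * t₁ - 36 * s₁ * (1 - s₁) * t₂) ^ 2
          + 36 * (s₁ - s₂) ^ 2 * (36 * s₂ * (1 - s₂)) * t₁ ^ 2)
        / ((36 * s₁ * (1 - s₁)) ^ 2 * (36 * s₂ * (1 - s₂))) := by positivity
  linarith

lemma H_ineq (χ ρ : ℝ) (hχ : 0 < χ) (hρ : 0 < ρ) (x y z : ℝ) :
    Hfun χ ρ x - Hfun χ ρ y
      ≤ (χ - 2 * χ * ρ * (2 * y - z)) * (x - y) + χ * ρ * (x - y) ^ 2 + χ * ρ * (y - z) ^ 2 := by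
  simp only [Hfun]
  nlinarith [sq_nonneg (x - y), sq_nonneg (x - 2*y + z), mul_pos hχ hρ,
    mul_nonneg (le_of_lt (mul_pos hχ hρ)) (sq_nonneg (x - y)),
    mul_nonneg (le_of_lt (mul_pos hχ hρ)) (sq_nonneg (x - 2*y + z))]

lemma young_ineq (A dt χ ρ u v : ℝ) (hA : 0 < A) :
    2 * χ * ρ * dt * (u * v) ≤ A * dt ^ 2 * (v * v) + χ ^ 2 * ρ ^ 2 / A * (u * u) := by
  have key : A * (A * dt ^ 2 * (v * v) + χ ^ 2 * ρ ^ 2 / A * (u * u) - 2 * χ * ρ * dt * (u * v))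
      = (A * dt * v - χ * ρ * u) ^ 2 := by
    field_simp
    ring
  nlinarith [sq_nonneg (A * dt * v - χ * ρ * u), key, hA]

lemma Dx_sub (h : ℝ) (f g : ZMod N × ZMod N → ℝ) (p : ZMod N × ZMod N) :
    Dx h (fun q => f q - g q) p = Dx h f p - Dx h g p := by
  simp only [Dx]; ring

lemma Dy_sub (h : ℝ) (f g : ZMod N × ZMod N → ℝ) (p : ZMod N × ZMod N) :
    Dy h (fun q => f q - g q) p = Dy h f p - Dy h g p := by
  simp only [Dy]; ring

lemma kap_sum_ineq (h : ℝ) (a b : ZMod N × ZMod N → ℝ)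
    (ha : ∀ p, 0 < a p ∧ a p < 1) (hb : ∀ p, 0 < b p ∧ b p < 1) :
    ∑ p : ZMod N × ZMod N,
        kap (a p) * (ax (fun q => (Dx h a q) ^ 2) p + ay (fun q => (Dy h a q) ^ 2) p)
      - ∑ p : ZMod N × ZMod N,
        kap (b p) * (ax (fun q => (Dx h b q) ^ 2) p + ay (fun q => (Dy h b q) ^ 2) p)
      ≤ ∑ p : ZMod N × ZMod N,
        ((kap' (a p) * (ax (fun q => (Dx h a q) ^ 2) p + ay (fun q => (Dy h a q) ^ 2) p)
          - 2 * dx h (fun q => Ax (fun r => kap (a r)) q * Dx h a q) p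
          - 2 * dy h (fun q => Ay (fun r => kap (a r)) q * Dy h a q) p) * (a p - b p)) := by
  -- rewrite the energy sums through the adjoint of the averages
  have ea : ∀ (φ : ZMod N × ZMod N → ℝ),
      ∑ p : ZMod N × ZMod N,
        kap (φ p) * (ax (fun q => (Dx h φ q) ^ 2) p + ay (fun q => (Dy h φ q) ^ 2) p)
      = ∑ p : ZMod N × ZMod N, Ax (fun r => kap (φ r)) p * (Dx h φ p) ^ 2
        + ∑ p : ZMod N × ZMod N, Ay (fun r => kap (φ r)) p * (Dy h φ p) ^ 2 := by
    intro φ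
    rw [Finset.sum_congr rfl (fun p _ => show
        kap (φ p) * (ax (fun q => (Dx h φ q) ^ 2) p + ay (fun q => (Dy h φ q) ^ 2) p)
        = kap (φ p) * ax (fun q => (Dx h φ q) ^ 2) p
          + kap (φ p) * ay (fun q => (Dy h φ q) ^ 2) p by ring),
      Finset.sum_add_distrib, adj_ax (fun r => kap (φ r)), adj_ay (fun r => kap (φ r))]
  -- rewrite the right-hand side
  have eRHS : ∑ p : ZMod N × ZMod N,
        ((kap' (a p) * (ax (fun q => (Dx h a q) ^ 2) p + ay (fun q => (Dy h a q) ^ 2) p)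
          - 2 * dx h (fun q => Ax (fun r => kap (a r)) q * Dx h a q) p
          - 2 * dy h (fun q => Ay (fun r => kap (a r)) q * Dy h a q) p) * (a p - b p))
      = ∑ p : ZMod N × ZMod N, Ax (fun r => kap' (a r) * (a r - b r)) p * (Dx h a p) ^ 2
        + ∑ p : ZMod N × ZMod N, Ay (fun r => kap' (a r) * (a r - b r)) p * (Dy h a p) ^ 2
        + 2 * ∑ p : ZMod N × ZMod N,
            Dx h (fun q => a q - b q) p * (Ax (fun r => kap (a r)) p * Dx h a p)
        + 2 * ∑ p : ZMod N × ZMod N,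
            Dy h (fun q => a q - b q) p * (Ay (fun r => kap (a r)) p * Dy h a p) := by
    rw [Finset.sum_congr rfl (fun p _ => show
        ((kap' (a p) * (ax (fun q => (Dx h a q) ^ 2) p + ay (fun q => (Dy h a q) ^ 2) p)
          - 2 * dx h (fun q => Ax (fun r => kap (a r)) q * Dx h a q) p
          - 2 * dy h (fun q => Ay (fun r => kap (a r)) q * Dy h a q) p) * (a p - b p))
        = ((kap' (a p) * (a p - b p)) * ax (fun q => (Dx h a q) ^ 2) p
            + (kap' (a p) * (a p - b p)) * ay (fun q => (Dy h a q) ^ 2) p)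
          + (-2) * ((fun q => a q - b q) p * dx h (fun q => Ax (fun r => kap (a r)) q * Dx h a q) p)
          + (-2) * ((fun q => a q - b q) p * dy h (fun q => Ay (fun r => kap (a r)) q * Dy h a q) p)
        by simp only []; ring),
      Finset.sum_add_distrib, Finset.sum_add_distrib, Finset.sum_add_distrib,
      ← Finset.mul_sum, ← Finset.mul_sum, sbp_x, sbp_y,
      adj_ax (fun r => kap' (a r) * (a r - b r)), adj_ay (fun r => kap' (a r) * (a r - b r))]
    ring
  rw [ea a, ea b, eRHS]
  have main : ∀ p : ZMod N × ZMod N,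
      (Ax (fun r => kap (a r)) p * (Dx h a p) ^ 2 + Ay (fun r => kap (a r)) p * (Dy h a p) ^ 2)
      - (Ax (fun r => kap (b r)) p * (Dx h b p) ^ 2 + Ay (fun r => kap (b r)) p * (Dy h b p) ^ 2)
      ≤ (Ax (fun r => kap' (a r) * (a r - b r)) p * (Dx h a p) ^ 2
          + Ay (fun r => kap' (a r) * (a r - b r)) p * (Dy h a p) ^ 2
          + 2 * (Dx h (fun q => a q - b q) p * (Ax (fun r => kap (a r)) p * Dx h a p))
          + 2 * (Dy h (fun q => a q - b q) p * (Ay (fun r => kap (a r)) p * Dy h a p))) := by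
    intro p
    have k1 := kap_ineq (a (p.1 + 1, p.2)) (b (p.1 + 1, p.2)) (Dx h a p) (Dx h b p)
      (ha _).1 (ha _).2 (hb _).1 (hb _).2
    have k2 := kap_ineq (a p) (b p) (Dx h a p) (Dx h b p)
      (ha _).1 (ha _).2 (hb _).1 (hb _).2
    have k3 := kap_ineq (a (p.1, p.2 + 1)) (b (p.1, p.2 + 1)) (Dy h a p) (Dy h b p)
      (ha _).1 (ha _).2 (hb _).1 (hb _).2
    have k4 := kap_ineq (a p) (b p) (Dy h a p) (Dy h b p)
      (ha _).1 (ha _).2 (hb _).1 (hb _).2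
    rw [Dx_sub, Dy_sub]
    simp only [Ax, Ay]
    linarith [k1, k2, k3, k4]
  calc (∑ p : ZMod N × ZMod N, Ax (fun r => kap (a r)) p * (Dx h a p) ^ 2
        + ∑ p : ZMod N × ZMod N, Ay (fun r => kap (a r)) p * (Dy h a p) ^ 2)
      - (∑ p : ZMod N × ZMod N, Ax (fun r => kap (b r)) p * (Dx h b p) ^ 2
        + ∑ p : ZMod N × ZMod N, Ay (fun r => kap (b r)) p * (Dy h b p) ^ 2)
      = ∑ p : ZMod N × ZMod N,
          ((Ax (fun r => kap (a r)) p * (Dx h a p) ^ 2 + Ay (fun r => kap (a r)) p * (Dy h a p) ^ 2)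
          - (Ax (fun r => kap (b r)) p * (Dx h b p) ^ 2
            + Ay (fun r => kap (b r)) p * (Dy h b p) ^ 2)) := by
        rw [Finset.sum_sub_distrib, Finset.sum_add_distrib, Finset.sum_add_distrib]
    _ ≤ ∑ p : ZMod N × ZMod N,
          (Ax (fun r => kap' (a r) * (a r - b r)) p * (Dx h a p) ^ 2
          + Ay (fun r => kap' (a r) * (a r - b r)) p * (Dy h a p) ^ 2
          + 2 * (Dx h (fun q => a q - b q) p * (Ax (fun r => kap (a r)) p * Dx h a p))
          + 2 * (Dy h (fun q => a q - b q) p * (Ay (fun r => kap (a r)) p * Dy h a p))) :=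
        Finset.sum_le_sum (fun p _ => main p)
    _ = _ := by
        rw [Finset.sum_add_distrib, Finset.sum_add_distrib, Finset.sum_add_distrib,
          ← Finset.mul_sum, ← Finset.mul_sum]

end EnergyHelpers

set_option maxHeartbeats 4000000 in
theorem unconditional_energy_stability (N : ℕ) [NeZero N] (hN : 1 ≤ N)
    (h dt A τ N₁ α β χ ρ : ℝ) (hh : 0 < h) (hdt : 0 < dt)
    (hτ : 0 < τ) (hN₁ : 0 < N₁) (hα : 0 < α) (hβ : 0 < β) (hχ : 0 < χ) (hρ : 1 < ρ)
    (hA : A ≥ χ ^ 2 * ρ ^ 2)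
    (φnp1 φn φnm1 : ZMod N × ZMod N → ℝ)
    (hφnp1 : ∀ p, 0 < φnp1 p ∧ φnp1 p < 1 / ρ)
    (hφn : ∀ p, 0 < φn p ∧ φn p < 1 / ρ)
    (hφnm1 : ∀ p, 0 < φnm1 p ∧ φnm1 p < 1 / ρ)
    (hmass : ∑ p : ZMod N × ZMod N, φn p = ∑ p : ZMod N × ZMod N, φnm1 p)
    (hscheme : ∀ p : ZMod N × ZMod N,
      3 * φnp1 p - 4 * φn p + φnm1 p
        = 2 * dt * lapH h (mu h dt A τ N₁ χ ρ φnp1 φn φnm1) p)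
    (ψa ψb : ZMod N × ZMod N → ℝ)
    (hψa0 : ∑ p : ZMod N × ZMod N, ψa p = 0)
    (hψb0 : ∑ p : ZMod N × ZMod N, ψb p = 0)
    (hψa : ∀ p : ZMod N × ZMod N, -lapH h ψa p = φnp1 p - φn p)
    (hψb : ∀ p : ZMod N × ZMod N, -lapH h ψb p = φn p - φnm1 p) :
    Fdisc h τ N₁ α β χ ρ φnp1
        + (1 / (4 * dt)) * (h ^ 2 * ∑ p : ZMod N × ZMod N, ψa p * (φnp1 p - φn p))
        + χ * ρ * (h ^ 2 * ∑ p : ZMod N × ZMod N, (φnp1 p - φn p) ^ 2)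
        + (1 / dt) * (1 - χ ^ 2 * ρ ^ 2 / A)
            * (h ^ 2 * ∑ p : ZMod N × ZMod N, ψa p * (φnp1 p - φn p))
      ≤ Fdisc h τ N₁ α β χ ρ φn
          + (1 / (4 * dt)) * (h ^ 2 * ∑ p : ZMod N × ZMod N, ψb p * (φn p - φnm1 p))
          + χ * ρ * (h ^ 2 * ∑ p : ZMod N × ZMod N, (φn p - φnm1 p) ^ 2) := by
  have hne : h ≠ 0 := ne_of_gt hh
  have hρ0 : (0:ℝ) < ρ := by linarith
  have hA0 : (0:ℝ) < A := lt_of_lt_of_le (by positivity) hA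
  have hbnd : ∀ (φ : ZMod N × ZMod N → ℝ), (∀ p, 0 < φ p ∧ φ p < 1 / ρ) →
      ∀ p : ZMod N × ZMod N, 0 < φ p ∧ φ p < 1 ∧ ρ * φ p < 1 := by
    intro φ hφ p
    have h1 := (hφ p).1
    have h2 := (hφ p).2
    have h3 : φ p * ρ < 1 := (lt_div_iff₀ hρ0).mp h2
    have h4 : 1 / ρ < 1 := (div_lt_one hρ0).mpr hρ
    exact ⟨h1, by linarith, by linarith [h3]⟩
  have ha := hbnd φnp1 hφnp1
  have hb := hbnd φn hφn
  have hc := hbnd φnm1 hφnm1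
  -- split the energies
  have hsplit : ∀ (φ : ZMod N × ZMod N → ℝ),
      ∑ p : ZMod N × ZMod N, (Sfun τ N₁ α β ρ (φ p) + Hfun χ ρ (φ p)
        + kap (φ p) * (ax (fun q => (Dx h φ q) ^ 2) p + ay (fun q => (Dy h φ q) ^ 2) p))
      = (∑ p : ZMod N × ZMod N, Sfun τ N₁ α β ρ (φ p))
        + (∑ p : ZMod N × ZMod N, Hfun χ ρ (φ p))
        + ∑ p : ZMod N × ZMod N,
            kap (φ p) * (ax (fun q => (Dx h φ q) ^ 2) p + ay (fun q => (Dy h φ q) ^ 2) p) := by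
    intro φ
    rw [Finset.sum_add_distrib, Finset.sum_add_distrib]
  simp only [Fdisc]
  rw [hsplit φnp1, hsplit φn]
  set SSa := ∑ p : ZMod N × ZMod N, Sfun τ N₁ α β ρ (φnp1 p) with hSSa_def
  set SSb := ∑ p : ZMod N × ZMod N, Sfun τ N₁ α β ρ (φn p) with hSSb_def
  set HHa := ∑ p : ZMod N × ZMod N, Hfun χ ρ (φnp1 p) with hHHa_def
  set HHb := ∑ p : ZMod N × ZMod N, Hfun χ ρ (φn p) with hHHb_def
  set KKa := ∑ p : ZMod N × ZMod N,
      kap (φnp1 p) * (ax (fun q => (Dx h φnp1 q) ^ 2) p + ay (fun q => (Dy h φnp1 q) ^ 2) p)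
    with hKKa_def
  set KKb := ∑ p : ZMod N × ZMod N,
      kap (φn p) * (ax (fun q => (Dx h φn q) ^ 2) p + ay (fun q => (Dy h φn q) ^ 2) p)
    with hKKb_def
  set Na := ∑ p : ZMod N × ZMod N, ψa p * (φnp1 p - φn p) with hNa_def
  set Nb := ∑ p : ZMod N × ZMod N, ψb p * (φn p - φnm1 p) with hNb_def
  set E2 := ∑ p : ZMod N × ZMod N, (φnp1 p - φn p) ^ 2 with hE2_def
  set E2' := ∑ p : ZMod N × ZMod N, (φn p - φnm1 p) ^ 2 with hE2'_def
  set Xv := ∑ p : ZMod N × ZMod N, ψa p * (φn p - φnm1 p) with hXv_def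
  set Qa := ∑ p : ZMod N × ZMod N, (Dx h ψa p * Dx h ψa p + Dy h ψa p * Dy h ψa p) with hQa_def
  set Qb := ∑ p : ZMod N × ZMod N, (Dx h ψb p * Dx h ψb p + Dy h ψb p * Dy h ψb p) with hQb_def
  set Qe := ∑ p : ZMod N × ZMod N,
      (Dx h (fun q => φnp1 q - φn q) p * Dx h (fun q => φnp1 q - φn q) p
        + Dy h (fun q => φnp1 q - φn q) p * Dy h (fun q => φnp1 q - φn q) p) with hQe_def
  set M := ∑ p : ZMod N × ZMod N,
      mu h dt A τ N₁ χ ρ φnp1 φn φnm1 p * (φnp1 p - φn p) with hM_def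
  -- mass conservation at the new step
  have hsum_e : ∑ p : ZMod N × ZMod N, (φnp1 p - φn p) = 0 := by
    have h1 : ∑ p : ZMod N × ZMod N, (3 * φnp1 p - 4 * φn p + φnm1 p) = 0 := by
      rw [Finset.sum_congr rfl (fun p _ => hscheme p), ← Finset.mul_sum,
        sum_lap h hne, mul_zero]
    have h2 : ∑ p : ZMod N × ZMod N, (3 * φnp1 p - 4 * φn p + φnm1 p)
        = 3 * (∑ p : ZMod N × ZMod N, φnp1 p) - 4 * (∑ p : ZMod N × ZMod N, φn p)
          + ∑ p : ZMod N × ZMod N, φnm1 p := by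
      rw [Finset.sum_add_distrib, Finset.sum_sub_distrib, ← Finset.mul_sum, ← Finset.mul_sum]
    rw [Finset.sum_sub_distrib]
    linarith [h1, h2, hmass]
  -- the H^{-1} pairing of the scheme
  have hM2 : 2 * dt * M = Xv - 3 * Na := by
    have hp1 : ∑ p : ZMod N × ZMod N, ψa p * (3 * φnp1 p - 4 * φn p + φnm1 p)
        = 3 * Na - Xv := by
      rw [Finset.sum_congr rfl (fun p _ => show
          ψa p * (3 * φnp1 p - 4 * φn p + φnm1 p)
          = 3 * (ψa p * (φnp1 p - φn p)) - ψa p * (φn p - φnm1 p) by ring),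
        Finset.sum_sub_distrib, ← Finset.mul_sum]
    have hp2 : ∑ p : ZMod N × ZMod N, ψa p * (3 * φnp1 p - 4 * φn p + φnm1 p)
        = 2 * dt * ∑ p : ZMod N × ZMod N,
            ψa p * lapH h (mu h dt A τ N₁ χ ρ φnp1 φn φnm1) p := by
      rw [Finset.mul_sum]
      exact Finset.sum_congr rfl (fun p _ => by rw [hscheme p]; ring)
    have hp3 : ∑ p : ZMod N × ZMod N, ψa p * lapH h (mu h dt A τ N₁ χ ρ φnp1 φn φnm1) p
        = -M := by
      rw [lap_symm h hne (mu h dt A τ N₁ χ ρ φnp1 φn φnm1) ψa]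
      rw [hM_def, ← Finset.sum_neg_distrib]
      refine Finset.sum_congr rfl (fun p _ => ?_)
      have h5 : lapH h ψa p = -(φnp1 p - φn p) := by linarith [hψa p]
      rw [h5]; ring
    rw [hp3] at hp2
    linarith [hp1, hp2]
  -- ‖·‖_{-1}-type identities
  have hNaQa : Na = Qa := by
    have h1 : ∑ p : ZMod N × ZMod N, ψa p * lapH h ψa p = -Qa := lap_pair h hne ψa ψa
    have h2 : Na = -∑ p : ZMod N × ZMod N, ψa p * lapH h ψa p := by
      rw [hNa_def, ← Finset.sum_neg_distrib]
      refine Finset.sum_congr rfl (fun p _ => ?_)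
      have h5 : lapH h ψa p = -(φnp1 p - φn p) := by linarith [hψa p]
      rw [h5]; ring
    rw [h2, h1, neg_neg]
  have hNbQb : Nb = Qb := by
    have h1 : ∑ p : ZMod N × ZMod N, ψb p * lapH h ψb p = -Qb := lap_pair h hne ψb ψb
    have h2 : Nb = -∑ p : ZMod N × ZMod N, ψb p * lapH h ψb p := by
      rw [hNb_def, ← Finset.sum_neg_distrib]
      refine Finset.sum_congr rfl (fun p _ => ?_)
      have h5 : lapH h ψb p = -(φn p - φnm1 p) := by linarith [hψb p]
      rw [h5]; ring
    rw [h2, h1, neg_neg]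
  -- Cauchy–Schwarz for the cross term
  have hXbound : 2 * Xv ≤ Na + Nb := by
    have h1 : ∑ p : ZMod N × ZMod N, ψa p * lapH h ψb p
        = -∑ p : ZMod N × ZMod N, (Dx h ψb p * Dx h ψa p + Dy h ψb p * Dy h ψa p) :=
      lap_pair h hne ψb ψa
    have h2 : Xv = ∑ p : ZMod N × ZMod N,
        (Dx h ψb p * Dx h ψa p + Dy h ψb p * Dy h ψa p) := by
      have h2a : Xv = -∑ p : ZMod N × ZMod N, ψa p * lapH h ψb p := by
        rw [hXv_def, ← Finset.sum_neg_distrib]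
        refine Finset.sum_congr rfl (fun p _ => ?_)
        have h5 : lapH h ψb p = -(φn p - φnm1 p) := by linarith [hψb p]
        rw [h5]; ring
      rw [h2a, h1, neg_neg]
    have h3 : ∑ p : ZMod N × ZMod N, (2 * (Dx h ψb p * Dx h ψa p + Dy h ψb p * Dy h ψa p))
        ≤ ∑ p : ZMod N × ZMod N,
          ((Dx h ψa p * Dx h ψa p + Dy h ψa p * Dy h ψa p)
            + (Dx h ψb p * Dx h ψb p + Dy h ψb p * Dy h ψb p)) := by
      refine Finset.sum_le_sum (fun p _ => ?_)
      nlinarith [sq_nonneg (Dx h ψa p - Dx h ψb p), sq_nonneg (Dy h ψa p - Dy h ψb p)]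
    rw [h2, hNaQa, hNbQb, hQa_def, hQb_def, Finset.mul_sum]
    rw [← Finset.sum_add_distrib]
    exact h3
  -- representation of the L² norm of the increment through gradients
  have hE2grad : E2 = ∑ p : ZMod N × ZMod N,
      (Dx h ψa p * Dx h (fun q => φnp1 q - φn q) p
        + Dy h ψa p * Dy h (fun q => φnp1 q - φn q) p) := by
    have h1 := lap_pair h hne ψa (fun q => φnp1 q - φn q)
    have h2 : E2 = -∑ p : ZMod N × ZMod N, (φnp1 p - φn p) * lapH h ψa p := by
      rw [hE2_def, ← Finset.sum_neg_distrib]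
      refine Finset.sum_congr rfl (fun p _ => ?_)
      have h5 : lapH h ψa p = -(φnp1 p - φn p) := by linarith [hψa p]
      rw [h5]; ring
    rw [h2, h1, neg_neg]
  -- weighted Young inequality
  have hYoung : 2 * χ * ρ * dt * E2 ≤ A * dt ^ 2 * Qe + χ ^ 2 * ρ ^ 2 / A * Na := by
    rw [hNaQa, hE2grad]
    calc 2 * χ * ρ * dt * ∑ p : ZMod N × ZMod N,
          (Dx h ψa p * Dx h (fun q => φnp1 q - φn q) p
            + Dy h ψa p * Dy h (fun q => φnp1 q - φn q) p)
        = ∑ p : ZMod N × ZMod N,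
          (2 * χ * ρ * dt * (Dx h ψa p * Dx h (fun q => φnp1 q - φn q) p)
            + 2 * χ * ρ * dt * (Dy h ψa p * Dy h (fun q => φnp1 q - φn q) p)) := by
          rw [Finset.mul_sum]
          exact Finset.sum_congr rfl (fun p _ => by ring)
      _ ≤ ∑ p : ZMod N × ZMod N,
          (A * dt ^ 2 * (Dx h (fun q => φnp1 q - φn q) p * Dx h (fun q => φnp1 q - φn q) p
              + Dy h (fun q => φnp1 q - φn q) p * Dy h (fun q => φnp1 q - φn q) p)
            + χ ^ 2 * ρ ^ 2 / A * (Dx h ψa p * Dx h ψa p + Dy h ψa p * Dy h ψa p)) := by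
          refine Finset.sum_le_sum (fun p _ => ?_)
          have y1 := young_ineq A dt χ ρ (Dx h ψa p) (Dx h (fun q => φnp1 q - φn q) p) hA0
          have y2 := young_ineq A dt χ ρ (Dy h ψa p) (Dy h (fun q => φnp1 q - φn q) p) hA0
          linarith [y1, y2]
      _ = A * dt ^ 2 * Qe + χ ^ 2 * ρ ^ 2 / A * Qa := by
          rw [Finset.sum_add_distrib, ← Finset.mul_sum, ← Finset.mul_sum, hQe_def, hQa_def]
  -- convexity estimate for the logarithmic part
  have hSsum : SSa - SSb ≤ ∑ p : ZMod N × ZMod N,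
      (((1 / τ + 1 / N₁) * Real.log (φnp1 p) - ρ * Real.log (1 - ρ * φnp1 p))
        * (φnp1 p - φn p)) := by
    have step : ∑ p : ZMod N × ZMod N, (Sfun τ N₁ α β ρ (φnp1 p) - Sfun τ N₁ α β ρ (φn p))
        ≤ ∑ p : ZMod N × ZMod N,
          ((((1 / τ + 1 / N₁) * Real.log (φnp1 p) - ρ * Real.log (1 - ρ * φnp1 p))
              * (φnp1 p - φn p))
            + ((Real.log α - Real.log τ + 1) / τ + (Real.log β - Real.log τ + 1) / N₁ - ρ)
              * (φnp1 p - φn p)) := by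
      refine Finset.sum_le_sum (fun p _ => ?_)
      exact S_ineq τ N₁ α β ρ (φnp1 p) (φn p) hτ hN₁ hα hβ
        (ha p).1 (ha p).2.2 (hb p).1 (hb p).2.2
    rw [Finset.sum_sub_distrib] at step
    rw [Finset.sum_add_distrib, ← Finset.mul_sum, hsum_e, mul_zero, add_zero] at step
    exact step
  -- concavity estimate for the H part
  have hHsum : HHa - HHb ≤ (∑ p : ZMod N × ZMod N,
      (-(2 * χ * ρ * (2 * φn p - φnm1 p)) * (φnp1 p - φn p)))
      + χ * ρ * E2 + χ * ρ * E2' := by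
    have step : ∑ p : ZMod N × ZMod N, (Hfun χ ρ (φnp1 p) - Hfun χ ρ (φn p))
        ≤ ∑ p : ZMod N × ZMod N,
          (χ * (φnp1 p - φn p) + (-(2 * χ * ρ * (2 * φn p - φnm1 p)) * (φnp1 p - φn p))
            + (χ * ρ * (φnp1 p - φn p) ^ 2 + χ * ρ * (φn p - φnm1 p) ^ 2)) := by
      refine Finset.sum_le_sum (fun p _ => ?_)
      have := H_ineq χ ρ hχ hρ0 (φnp1 p) (φn p) (φnm1 p)
      linarith [this]
    rw [Finset.sum_sub_distrib] at step
    rw [Finset.sum_add_distrib, Finset.sum_add_distrib, Finset.sum_add_distrib,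
      ← Finset.mul_sum, hsum_e, mul_zero, zero_add, ← Finset.mul_sum, ← Finset.mul_sum]
      at step
    rw [hE2_def, hE2'_def]
    linarith [step]
  -- convexity estimate for the deGennes part
  have hKsum : KKa - KKb ≤ ∑ p : ZMod N × ZMod N,
      ((kap' (φnp1 p) * (ax (fun q => (Dx h φnp1 q) ^ 2) p + ay (fun q => (Dy h φnp1 q) ^ 2) p)
        - 2 * dx h (fun q => Ax (fun r => kap (φnp1 r)) q * Dx h φnp1 q) p
        - 2 * dy h (fun q => Ay (fun r => kap (φnp1 r)) q * Dy h φnp1 q) p)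
        * (φnp1 p - φn p)) := by
    rw [hKKa_def, hKKb_def]
    exact kap_sum_ineq h φnp1 φn (fun p => ⟨(ha p).1, (ha p).2.1⟩)
      (fun p => ⟨(hb p).1, (hb p).2.1⟩)
  -- the Douglas–Dupont term
  have hMA : ∑ p : ZMod N × ZMod N,
      (-(A * dt * lapH h (fun q => φnp1 q - φn q) p) * (φnp1 p - φn p))
      = A * dt * Qe := by
    have h1 := lap_pair h hne (fun q => φnp1 q - φn q) (fun q => φnp1 q - φn q)
    rw [Finset.sum_congr rfl (fun p _ => show
        -(A * dt * lapH h (fun q => φnp1 q - φn q) p) * (φnp1 p - φn p)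
        = -(A * dt) * ((φnp1 p - φn p) * lapH h (fun q => φnp1 q - φn q) p) by ring),
      ← Finset.mul_sum, h1, hQe_def]
    ring
  -- decomposition of the chemical-potential pairing
  have hMsplit : M = (∑ p : ZMod N × ZMod N,
        (((1 / τ + 1 / N₁) * Real.log (φnp1 p) - ρ * Real.log (1 - ρ * φnp1 p))
          * (φnp1 p - φn p)))
      + (∑ p : ZMod N × ZMod N,
        ((kap' (φnp1 p) * (ax (fun q => (Dx h φnp1 q) ^ 2) p
            + ay (fun q => (Dy h φnp1 q) ^ 2) p)
          - 2 * dx h (fun q => Ax (fun r => kap (φnp1 r)) q * Dx h φnp1 q) p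
          - 2 * dy h (fun q => Ay (fun r => kap (φnp1 r)) q * Dy h φnp1 q) p)
          * (φnp1 p - φn p)))
      + (∑ p : ZMod N × ZMod N,
        (-(2 * χ * ρ * (2 * φn p - φnm1 p)) * (φnp1 p - φn p)))
      + ∑ p : ZMod N × ZMod N,
        (-(A * dt * lapH h (fun q => φnp1 q - φn q) p) * (φnp1 p - φn p)) := by
    rw [hM_def, ← Finset.sum_add_distrib, ← Finset.sum_add_distrib, ← Finset.sum_add_distrib]
    refine Finset.sum_congr rfl (fun p _ => ?_)
    simp only [mu]
    ring
  -- combined energy inequality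
  have hS : SSa + HHa + KKa - (SSb + HHb + KKb)
      ≤ M - A * dt * Qe + χ * ρ * E2 + χ * ρ * E2' := by
    linarith [hSsum, hHsum, hKsum, hMsplit, hMA]
  -- final assembly at the level of sums
  have key : 4 * dt * (SSa + HHa + KKa) + Na + 4 * dt * (χ * ρ * E2)
      + 4 * (1 - χ ^ 2 * ρ ^ 2 / A) * Na
      ≤ 4 * dt * (SSb + HHb + KKb) + Nb + 4 * dt * (χ * ρ * E2') := by
    have hS4 := mul_le_mul_of_nonneg_left hS (show (0:ℝ) ≤ 4 * dt by linarith)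
    linarith [hM2, hXbound, hYoung, hS4]
  have h4dt : (0:ℝ) < 4 * dt := by linarith
  refine le_of_mul_le_mul_left ?_ h4dt
  calc 4 * dt * (h ^ 2 * (SSa + HHa + KKa) + 1 / (4 * dt) * (h ^ 2 * Na)
        + χ * ρ * (h ^ 2 * E2) + 1 / dt * (1 - χ ^ 2 * ρ ^ 2 / A) * (h ^ 2 * Na))
      = h ^ 2 * (4 * dt * (SSa + HHa + KKa) + Na + 4 * dt * (χ * ρ * E2)
        + 4 * (1 - χ ^ 2 * ρ ^ 2 / A) * Na) := by
        field_simp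
    _ ≤ h ^ 2 * (4 * dt * (SSb + HHb + KKb) + Nb + 4 * dt * (χ * ρ * E2')) :=
        mul_le_mul_of_nonneg_left key (sq_nonneg h)
    _ = 4 * dt * (h ^ 2 * (SSb + HHb + KKb) + 1 / (4 * dt) * (h ^ 2 * Nb)
        + χ * ρ * (h ^ 2 * E2')) := by
        field_simp
end

section
/- Fix an integer N ≥ 1 and a real number h > 0. Let v, ψ : ZMod N × ZMod N → ℝ be periodic grid functions with −Δ_h ψ (i,j) = v(i,j) for all (i,j). Then (h² Σ_{(i,j)} v(i,j)²)² ≤ (h² Σ_{(i,j)} [(D_x v(i,j))² + (D_y v(i,j))²]) · (h² Σ_{(i,j)} [(D_x ψ(i,j))² + (D_y ψ(i,j))²]); that is, ‖v‖₂² ≤ ‖∇_h v‖₂ · ‖v‖_{−1,h}. -/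
lemma sum_shift_x {N : ℕ} [NeZero N] (F : ZMod N × ZMod N → ℝ) :
    ∑ p : ZMod N × ZMod N, F (p.1 + 1, p.2) = ∑ p : ZMod N × ZMod N, F p :=
  Fintype.sum_equiv ((Equiv.addRight (1 : ZMod N)).prodCongr (Equiv.refl _)) _ _
    (fun p => rfl)

lemma sum_shift_y {N : ℕ} [NeZero N] (F : ZMod N × ZMod N → ℝ) :
    ∑ p : ZMod N × ZMod N, F (p.1, p.2 + 1) = ∑ p : ZMod N × ZMod N, F p :=
  Fintype.sum_equiv ((Equiv.refl (ZMod N)).prodCongr (Equiv.addRight (1 : ZMod N))) _ _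
    (fun p => rfl)

lemma parts {N : ℕ} [NeZero N] (h : ℝ) (hh : 0 < h) (v ψ : ZMod N × ZMod N → ℝ) :
    ∑ p : ZMod N × ZMod N, (Dx h v p * Dx h ψ p + Dy h v p * Dy h ψ p)
      = ∑ p : ZMod N × ZMod N, v p * (-lapH h ψ p) := by
  have hne : h ≠ 0 := ne_of_gt hh
  have expand : ∀ p : ZMod N × ZMod N,
      Dx h v p * Dx h ψ p + Dy h v p * Dy h ψ p
        = (v (p.1 + 1, p.2) * ψ (p.1 + 1, p.2) + v (p.1, p.2 + 1) * ψ (p.1, p.2 + 1)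
            + 2 * (v p * ψ p)
            - (v (p.1 + 1, p.2) * ψ p + v (p.1, p.2 + 1) * ψ p
              + v p * ψ (p.1 + 1, p.2) + v p * ψ (p.1, p.2 + 1))) / h ^ 2 := by
    intro p
    simp only [Dx, Dy]
    field_simp
    ring
  have expand2 : ∀ p : ZMod N × ZMod N,
      v p * (-lapH h ψ p)
        = (4 * (v p * ψ p) - (v p * ψ (p.1 + 1, p.2) + v p * ψ (p.1 - 1, p.2)
            + v p * ψ (p.1, p.2 + 1) + v p * ψ (p.1, p.2 - 1))) / h ^ 2 := by
    intro p
    simp only [lapH]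
    field_simp
    ring
  simp only [expand, expand2, ← Finset.sum_div]
  congr 1
  have e1 : ∑ p : ZMod N × ZMod N, v (p.1 + 1, p.2) * ψ (p.1 + 1, p.2)
      = ∑ p : ZMod N × ZMod N, v p * ψ p := sum_shift_x (fun p => v p * ψ p)
  have e2 : ∑ p : ZMod N × ZMod N, v (p.1, p.2 + 1) * ψ (p.1, p.2 + 1)
      = ∑ p : ZMod N × ZMod N, v p * ψ p := sum_shift_y (fun p => v p * ψ p)
  have e3 : ∑ p : ZMod N × ZMod N, v (p.1 + 1, p.2) * ψ p
      = ∑ p : ZMod N × ZMod N, v p * ψ (p.1 - 1, p.2) := by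
    refine Fintype.sum_equiv ((Equiv.addRight (1 : ZMod N)).prodCongr (Equiv.refl _)) _ _ ?_
    intro p
    simp [Prod.map]
  have e4 : ∑ p : ZMod N × ZMod N, v (p.1, p.2 + 1) * ψ p
      = ∑ p : ZMod N × ZMod N, v p * ψ (p.1, p.2 - 1) := by
    refine Fintype.sum_equiv ((Equiv.refl (ZMod N)).prodCongr (Equiv.addRight (1 : ZMod N))) _ _ ?_
    intro p
    simp [Prod.map]
  simp only [Finset.sum_sub_distrib, Finset.sum_add_distrib, ← Finset.mul_sum]
  rw [e1, e2, e3, e4]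
  ring

theorem discrete_interpolation_inequality (N : ℕ) [NeZero N] (hN : 1 ≤ N)
    (h : ℝ) (hh : 0 < h) (v ψ : ZMod N × ZMod N → ℝ)
    (hψ : ∀ p : ZMod N × ZMod N, -lapH h ψ p = v p) :
    (h ^ 2 * ∑ p : ZMod N × ZMod N, (v p) ^ 2) ^ 2
      ≤ (h ^ 2 * ∑ p : ZMod N × ZMod N, ((Dx h v p) ^ 2 + (Dy h v p) ^ 2))
        * (h ^ 2 * ∑ p : ZMod N × ZMod N, ((Dx h ψ p) ^ 2 + (Dy h ψ p) ^ 2)) := by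
  have key : ∑ p : ZMod N × ZMod N, (v p) ^ 2
      = ∑ p : ZMod N × ZMod N, (Dx h v p * Dx h ψ p + Dy h v p * Dy h ψ p) := by
    rw [parts h hh v ψ]
    exact Finset.sum_congr rfl fun p _ => by rw [hψ p, sq]
  rw [key]
  have cs := Finset.sum_mul_sq_le_sq_mul_sq (Finset.univ : Finset ((ZMod N × ZMod N) ⊕ (ZMod N × ZMod N)))
      (Sum.elim (Dx h v) (Dy h v)) (Sum.elim (Dx h ψ) (Dy h ψ))
  simp only [Fintype.sum_sum_type, Sum.elim_inl, Sum.elim_inr, ← Finset.sum_add_distrib] at cs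
  calc (h ^ 2 * ∑ p : ZMod N × ZMod N, (Dx h v p * Dx h ψ p + Dy h v p * Dy h ψ p)) ^ 2
      = h ^ 2 * h ^ 2 * (∑ p : ZMod N × ZMod N, (Dx h v p * Dx h ψ p + Dy h v p * Dy h ψ p)) ^ 2 := by
        ring
    _ ≤ h ^ 2 * h ^ 2 * ((∑ p : ZMod N × ZMod N, ((Dx h v p) ^ 2 + (Dy h v p) ^ 2))
        * (∑ p : ZMod N × ZMod N, ((Dx h ψ p) ^ 2 + (Dy h ψ p) ^ 2))) := by
        exact mul_le_mul_of_nonneg_left cs (by positivity)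
    _ = _ := by ring
end
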